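/- arXiv:1905.01918 — 6 statements merged into one kernel-verified Lean document; each statement's English description precedes it below -/
import Mathlib

section
/- Let N be a positive integer, let A, A_k, Â_k ∈ ℝ^{N×N} be matrices, let b, x_k ∈ ℝ^N, and set W_k := A_k − Â_k. Assume the saturation condition ‖Â_k x_k − A x_k‖₂ ≤ c_sat ‖A_k x_k − A x_k‖₂ with a constant 0 < c_sat < 1, and assume ‖b − A_k x_k‖₂ ≤ α ‖W_k x_k‖₂ for some constant α ≥ 0. Then ‖b − A x_k‖₂ ≤ (1 + α(1 + c_sat))/(1 − c_sat) · ‖W_k x_k‖₂. -/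
/-- The Euclidean norm on `ℝ^N`. -/
noncomputable def enorm {N : ℕ} (v : Fin N → ℝ) : ℝ :=
  Real.sqrt (∑ i, v i ^ 2)

lemma enorm_eq_norm {N : ℕ} (v : Fin N → ℝ) :
    _root_.enorm v = ‖(WithLp.equiv 2 (Fin N → ℝ)).symm v‖ := by
  rw [EuclideanSpace.norm_eq, _root_.enorm]
  congr 1
  apply Finset.sum_congr rfl
  intro i _
  simp [sq_abs]

lemma enorm_nonneg {N : ℕ} (v : Fin N → ℝ) : 0 ≤ _root_.enorm v :=
  Real.sqrt_nonneg _

lemma enorm_triangle {N : ℕ} (u v : Fin N → ℝ) :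
    _root_.enorm (u + v) ≤ _root_.enorm u + _root_.enorm v := by
  simp only [enorm_eq_norm]
  exact norm_add_le _ _

/-- Lemma 1 (reliability, first inequality): under the saturation condition and the
assumption that the residual of the approximate system is controlled by `α‖W_k x_k‖₂`,
the true residual is bounded by `(1 + α(1 + c_sat))/(1 − c_sat) · ‖W_k x_k‖₂`. -/
theorem reliability_first_inequality
    (N : ℕ) (hN : 0 < N)
    (A Ak Ahk : Matrix (Fin N) (Fin N) ℝ) (b xk : Fin N → ℝ)
    (Wk : Matrix (Fin N) (Fin N) ℝ) (hW : Wk = Ak - Ahk)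
    (csat α : ℝ) (hc0 : 0 < csat) (hc1 : csat < 1) (hα : 0 ≤ α)
    (hsat : _root_.enorm (Ahk.mulVec xk - A.mulVec xk) ≤ csat * _root_.enorm (Ak.mulVec xk - A.mulVec xk))
    (hres : _root_.enorm (b - Ak.mulVec xk) ≤ α * _root_.enorm (Wk.mulVec xk)) :
    _root_.enorm (b - A.mulVec xk) ≤
      (1 + α * (1 + csat)) / (1 - csat) * _root_.enorm (Wk.mulVec xk) := by
  set r := _root_.enorm (Ak.mulVec xk - A.mulVec xk) with hr
  set w := _root_.enorm (Wk.mulVec xk) with hw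
  have hwW : Wk.mulVec xk = Ak.mulVec xk - Ahk.mulVec xk := by
    rw [hW, Matrix.sub_mulVec]
  have hr_nonneg : 0 ≤ r := enorm_nonneg _
  have hw_nonneg : 0 ≤ w := enorm_nonneg _
  -- r ≤ w + csat * r
  have h1 : r ≤ w + csat * r := by
    have : Ak.mulVec xk - A.mulVec xk =
        (Ak.mulVec xk - Ahk.mulVec xk) + (Ahk.mulVec xk - A.mulVec xk) := by
      abel
    calc r = _root_.enorm ((Ak.mulVec xk - Ahk.mulVec xk) + (Ahk.mulVec xk - A.mulVec xk)) := by
            rw [hr, this]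
      _ ≤ _root_.enorm (Ak.mulVec xk - Ahk.mulVec xk) + _root_.enorm (Ahk.mulVec xk - A.mulVec xk) :=
            enorm_triangle _ _
      _ ≤ w + csat * r := by
            rw [hw, hwW]
            exact add_le_add le_rfl hsat
  have hden : 0 < 1 - csat := by linarith
  have h2 : r ≤ w / (1 - csat) := by
    rw [le_div_iff₀ hden]
    nlinarith
  have h3 : _root_.enorm (b - A.mulVec xk) ≤ α * w + r := by
    have : b - A.mulVec xk = (b - Ak.mulVec xk) + (Ak.mulVec xk - A.mulVec xk) := by
      abel
    calc _root_.enorm (b - A.mulVec xk)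
        = _root_.enorm ((b - Ak.mulVec xk) + (Ak.mulVec xk - A.mulVec xk)) := by rw [this]
      _ ≤ _root_.enorm (b - Ak.mulVec xk) + r := enorm_triangle _ _
      _ ≤ α * w + r := add_le_add hres le_rfl
  have h4 : α * w + w / (1 - csat) ≤ (1 + α * (1 + csat)) / (1 - csat) * w := by
    rw [div_mul_eq_mul_div, le_div_iff₀ hden, add_mul, div_mul_cancel₀ _ hden.ne']
    nlinarith [mul_nonneg (mul_nonneg hα hc0.le) hw_nonneg]
  calc _root_.enorm (b - A.mulVec xk) ≤ α * w + r := h3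
    _ ≤ α * w + w / (1 - csat) := by linarith
    _ ≤ (1 + α * (1 + csat)) / (1 - csat) * w := h4
end

section
/- Let N be a positive integer, let W ∈ ℝ^{N×N}, and let P be a finite set of blocks (t,s) with t, s ⊆ {1,…,N} such that: (i) the product index sets t×s, (t,s) ∈ P, are pairwise disjoint; (ii) for any two distinct blocks of P, their row clusters t are either equal or disjoint; (iii) for every subset t ⊆ {1,…,N}, at most c_sp blocks of P have row cluster t, where c_sp is a positive integer; and (iv) W_{ij} = 0 whenever the pair (i,j) is not contained in t×s for any (t,s) ∈ P. Then for every x ∈ ℝ^N it holds that ‖Wx‖₂² ≤ c_sp · Σ_{(t,s)∈P} ‖W_{ts} x_s‖₂². -/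
open Finset

/-- The Euclidean norm on `ℝ^N`. -/
noncomputable def enorm' {N : ℕ} (v : Fin N → ℝ) : ℝ :=
  Real.sqrt (∑ i, v i ^ 2)

/-- `‖M_{ts} x_s‖₂² = Σ_{i∈t} (Σ_{j∈s} M_{ij} x_j)²`. -/
def blockNormSq {N : ℕ} (M : Matrix (Fin N) (Fin N) ℝ)
    (t s : Finset (Fin N)) (x : Fin N → ℝ) : ℝ :=
  ∑ i ∈ t, (∑ j ∈ s, M i j * x j) ^ 2

/-- Single-level case used in the proof of the reliability lemma: a Cartesian product
block matrix `W` supported on a block partition `P` with row-cluster sparsity constant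
`c_sp` satisfies `‖Wx‖₂² ≤ c_sp · Σ_{(t,s)∈P} ‖W_{ts} x_s‖₂²`. -/
theorem single_level_block_bound
    (N csp : ℕ) (hN : 0 < N) (hcsp : 0 < csp)
    (W : Matrix (Fin N) (Fin N) ℝ)
    (P : Finset (Finset (Fin N) × Finset (Fin N)))
    (hdisj : ∀ b ∈ P, ∀ b' ∈ P, b ≠ b' → Disjoint (b.1 ×ˢ b.2) (b'.1 ×ˢ b'.2))
    (hrows : ∀ b ∈ P, ∀ b' ∈ P, b.1 = b'.1 ∨ Disjoint b.1 b'.1)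
    (hsparse : ∀ t : Finset (Fin N), (P.filter (fun b => b.1 = t)).card ≤ csp)
    (hzero : ∀ i j, (∀ b ∈ P, ¬(i ∈ b.1 ∧ j ∈ b.2)) → W i j = 0) :
    ∀ x : Fin N → ℝ,
      enorm' (W.mulVec x) ^ 2 ≤ (csp : ℝ) * ∑ b ∈ P, blockNormSq W b.1 b.2 x := by
  intro x
  have h1 : enorm' (W.mulVec x) ^ 2 = ∑ i, (W.mulVec x i) ^ 2 := by
    unfold enorm'
    rw [Real.sq_sqrt (by positivity)]
  rw [h1]
  have key : ∀ i : Fin N, (W.mulVec x i) ^ 2 ≤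
      (csp : ℝ) * ∑ b ∈ P.filter (fun b => i ∈ b.1), (∑ j ∈ b.2, W i j * x j) ^ 2 := by
    intro i
    set Pi := P.filter (fun b => i ∈ b.1) with hPi
    have hmem : ∀ b ∈ Pi, b ∈ P ∧ i ∈ b.1 := by
      intro b hb
      exact Finset.mem_filter.mp hb
    have hdisj2 : (Pi : Set (Finset (Fin N) × Finset (Fin N))).PairwiseDisjoint
        (fun b => b.2) := by
      intro b hb b' hb' hne
      simp only [Function.onFun]
      have hb := hmem b hb
      have hb' := hmem b' hb'
      have hd := hdisj b hb.1 b' hb'.1 hne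
      rw [Finset.disjoint_left]
      intro j hj hj'
      exact (Finset.disjoint_left.mp hd (Finset.mk_mem_product hb.2 hj))
        (Finset.mk_mem_product hb'.2 hj')
    have hsum : W.mulVec x i = ∑ b ∈ Pi, ∑ j ∈ b.2, W i j * x j := by
      rw [← Finset.sum_biUnion hdisj2]
      rw [Matrix.mulVec, dotProduct]
      symm
      apply Finset.sum_subset (Finset.subset_univ _)
      intro j _ hj
      have : W i j = 0 := by
        apply hzero
        intro b hbP hcon
        exact hj (Finset.mem_biUnion.mpr ⟨b, Finset.mem_filter.mpr ⟨hbP, hcon.1⟩, hcon.2⟩)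
      simp [this]
    rw [hsum]
    have hcs := sq_sum_le_card_mul_sum_sq (s := Pi) (f := fun b => ∑ j ∈ b.2, W i j * x j)
    refine hcs.trans ?_
    have hcard : (Pi.card : ℝ) ≤ (csp : ℝ) := by
      rcases Pi.eq_empty_or_nonempty with h | ⟨b₀, hb₀⟩
      · simp [h]
      · have hb₀' := hmem b₀ hb₀
        have hsub : Pi ⊆ P.filter (fun b => b.1 = b₀.1) := by
          intro b hb
          have hb' := hmem b hb
          refine Finset.mem_filter.mpr ⟨hb'.1, ?_⟩
          rcases hrows b hb'.1 b₀ hb₀'.1 with h | h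
          · exact h
          · exact absurd (Finset.disjoint_left.mp h hb'.2) (by simp [hb₀'.2])
        exact_mod_cast (Finset.card_le_card hsub).trans (hsparse b₀.1)
    exact mul_le_mul_of_nonneg_right hcard (by positivity)
  calc ∑ i, (W.mulVec x i) ^ 2
      ≤ ∑ i, (csp : ℝ) * ∑ b ∈ P.filter (fun b => i ∈ b.1),
          (∑ j ∈ b.2, W i j * x j) ^ 2 := Finset.sum_le_sum (fun i _ => key i)
    _ = (csp : ℝ) * ∑ i, ∑ b ∈ P.filter (fun b => i ∈ b.1),
          (∑ j ∈ b.2, W i j * x j) ^ 2 := by rw [Finset.mul_sum]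
    _ = (csp : ℝ) * ∑ b ∈ P, blockNormSq W b.1 b.2 x := by
        congr 1
        unfold blockNormSq
        calc ∑ i, ∑ b ∈ P.filter (fun b => i ∈ b.1), (∑ j ∈ b.2, W i j * x j) ^ 2
            = ∑ i : Fin N, ∑ b ∈ P, if i ∈ b.1 then (∑ j ∈ b.2, W i j * x j) ^ 2 else 0 := by
              simp [Finset.sum_filter]
          _ = ∑ b ∈ P, ∑ i : Fin N, if i ∈ b.1 then (∑ j ∈ b.2, W i j * x j) ^ 2 else 0 :=
              Finset.sum_comm
          _ = _ := by simp [Finset.sum_ite_mem]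
end

section
/- Let N, L, c_sp be positive integers, let W ∈ ℝ^{N×N}, and let P be an L-level sparse block collection with sparsity constant c_sp such that W_{ij} = 0 whenever the pair (i,j) is not contained in t×s for any block (t,s) ∈ P. Then for every x ∈ ℝ^N it holds that ‖Wx‖₂² ≤ c_sp · L · Σ_{(t,s)∈P} ‖W_{ts} x_s‖₂². -/
open Finset

/-- The Euclidean norm on `ℝ^N`. -/
noncomputable def euclidNorm {N : ℕ} (v : Fin N → ℝ) : ℝ :=
  Real.sqrt (∑ i, v i ^ 2)

/-- An `L`-level sparse block collection with sparsity constant `c_sp`: a finite set `P`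
of blocks `(t,s)`, `t,s ⊆ {1,…,N}`, with a level function `lvl : P → {1,…,L}` such that
the product index sets are pairwise disjoint, row (resp. column) clusters of blocks of
the same level are equal or disjoint, and on each level at most `c_sp` blocks share a
given row (resp. column) cluster. -/
structure SparseBlockCollection (N L csp : ℕ) where
  P : Finset (Finset (Fin N) × Finset (Fin N))
  lvl : Finset (Fin N) × Finset (Fin N) → ℕ
  lvl_range : ∀ b ∈ P, 1 ≤ lvl b ∧ lvl b ≤ L
  prod_disjoint : ∀ b ∈ P, ∀ b' ∈ P, b ≠ b' → Disjoint (b.1 ×ˢ b.2) (b'.1 ×ˢ b'.2)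
  rows_eq_or_disjoint : ∀ b ∈ P, ∀ b' ∈ P, lvl b = lvl b' → b.1 = b'.1 ∨ Disjoint b.1 b'.1
  cols_eq_or_disjoint : ∀ b ∈ P, ∀ b' ∈ P, lvl b = lvl b' → b.2 = b'.2 ∨ Disjoint b.2 b'.2
  row_sparsity : ∀ ℓ : ℕ, ∀ t : Finset (Fin N),
    (P.filter (fun b => lvl b = ℓ ∧ b.1 = t)).card ≤ csp
  col_sparsity : ∀ ℓ : ℕ, ∀ s : Finset (Fin N),
    (P.filter (fun b => lvl b = ℓ ∧ b.2 = s)).card ≤ csp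

/-- Multi-level block bound: if `W` vanishes outside the blocks of an `L`-level sparse
block collection `P` with sparsity constant `c_sp`, then
`‖Wx‖₂² ≤ c_sp · L · Σ_{(t,s)∈P} ‖W_{ts} x_s‖₂²` for every `x ∈ ℝ^N`. -/
theorem multi_level_block_bound
    (N L csp : ℕ) (hN : 0 < N) (hL : 0 < L) (hcsp : 0 < csp)
    (W : Matrix (Fin N) (Fin N) ℝ)
    (C : SparseBlockCollection N L csp)
    (hzero : ∀ i j, (∀ b ∈ C.P, ¬(i ∈ b.1 ∧ j ∈ b.2)) → W i j = 0) :
    ∀ x : Fin N → ℝ,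
      euclidNorm (W.mulVec x) ^ 2 ≤
        (csp : ℝ) * (L : ℝ) * ∑ b ∈ C.P, blockNormSq W b.1 b.2 x := by
  intro x
  have hmv : ∀ i, W.mulVec x i = ∑ j, W i j * x j := fun i => rfl
  have henorm : euclidNorm (W.mulVec x) ^ 2 = ∑ i, (W.mulVec x i) ^ 2 := by
    rw [euclidNorm, Real.sq_sqrt]
    positivity
  rw [henorm]
  have key : ∀ i : Fin N, (W.mulVec x i) ^ 2 ≤
      (csp : ℝ) * (L : ℝ) *
        ∑ b ∈ C.P.filter (fun b => i ∈ b.1), (∑ j ∈ b.2, W i j * x j) ^ 2 := by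
    intro i
    set B := C.P.filter (fun b => i ∈ b.1) with hB
    have hdisj : ∀ b ∈ B, ∀ b' ∈ B, b ≠ b' → Disjoint b.2 b'.2 := by
      intro b hb b' hb' hne
      simp only [hB, Finset.mem_filter] at hb hb'
      rw [Finset.disjoint_left]
      intro j hj hj'
      have hd := C.prod_disjoint b hb.1 b' hb'.1 hne
      rw [Finset.disjoint_left] at hd
      exact hd (Finset.mk_mem_product hb.2 hj) (Finset.mk_mem_product hb'.2 hj')
    have hsum : W.mulVec x i = ∑ b ∈ B, ∑ j ∈ b.2, W i j * x j := by
      have hU : W.mulVec x i = ∑ j ∈ B.biUnion (fun b => b.2), W i j * x j := by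
        rw [hmv i]
        symm
        apply Finset.sum_subset (Finset.subset_univ _)
        intro j _ hj
        have hz : W i j = 0 := by
          apply hzero
          intro b hb hib
          exact hj (Finset.mem_biUnion.mpr
            ⟨b, by simp [hB, Finset.mem_filter, hb, hib.1], hib.2⟩)
        rw [hz, zero_mul]
      rw [hU, Finset.sum_biUnion]
      intro b hb b' hb' hne
      exact hdisj b hb b' hb' hne
    have hcardN : B.card ≤ csp * L := by
      have hsub : B ⊆ (Finset.Icc 1 L).biUnion
          (fun ℓ => B.filter (fun b => C.lvl b = ℓ)) := by
        intro b hb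
        apply Finset.mem_biUnion.mpr
        refine ⟨C.lvl b, ?_, Finset.mem_filter.mpr ⟨hb, rfl⟩⟩
        exact Finset.mem_Icc.mpr (C.lvl_range b (Finset.mem_filter.mp hb).1)
      calc B.card ≤ ((Finset.Icc 1 L).biUnion
              (fun ℓ => B.filter (fun b => C.lvl b = ℓ))).card :=
            Finset.card_le_card hsub
        _ ≤ ∑ ℓ ∈ Finset.Icc 1 L, (B.filter (fun b => C.lvl b = ℓ)).card :=
            Finset.card_biUnion_le
        _ ≤ ∑ _ℓ ∈ Finset.Icc 1 L, csp := by
            apply Finset.sum_le_sum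
            intro ℓ _
            by_cases hne : (B.filter (fun b => C.lvl b = ℓ)).Nonempty
            · obtain ⟨b0, hb0⟩ := hne
              have hsub2 : B.filter (fun b => C.lvl b = ℓ) ⊆
                  C.P.filter (fun b => C.lvl b = ℓ ∧ b.1 = b0.1) := by
                intro b hb
                simp only [hB, Finset.mem_filter] at hb hb0 ⊢
                refine ⟨hb.1.1, hb.2, ?_⟩
                rcases C.rows_eq_or_disjoint b hb.1.1 b0 hb0.1.1
                    (by rw [hb.2, hb0.2]) with h | h
                · exact h
                · exact absurd (Finset.disjoint_left.mp h hb.1.2) (by simp [hb0.1.2])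
              exact le_trans (Finset.card_le_card hsub2) (C.row_sparsity ℓ b0.1)
            · simp [Finset.not_nonempty_iff_eq_empty.mp hne]
        _ = L * csp := by simp [Nat.card_Icc]
        _ = csp * L := Nat.mul_comm _ _
    have hcard : (B.card : ℝ) ≤ (csp : ℝ) * (L : ℝ) := by
      calc (B.card : ℝ) ≤ ((csp * L : ℕ) : ℝ) := by exact_mod_cast hcardN
        _ = (csp : ℝ) * (L : ℝ) := by push_cast; ring
    calc (W.mulVec x i) ^ 2 = (∑ b ∈ B, ∑ j ∈ b.2, W i j * x j) ^ 2 := by rw [hsum]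
      _ ≤ (B.card : ℝ) * ∑ b ∈ B, (∑ j ∈ b.2, W i j * x j) ^ 2 :=
          sq_sum_le_card_mul_sum_sq
      _ ≤ (csp : ℝ) * (L : ℝ) * ∑ b ∈ B, (∑ j ∈ b.2, W i j * x j) ^ 2 := by
          apply mul_le_mul_of_nonneg_right hcard (by positivity)
  calc ∑ i, (W.mulVec x i) ^ 2
      ≤ ∑ i, (csp : ℝ) * (L : ℝ) *
          ∑ b ∈ C.P.filter (fun b => i ∈ b.1), (∑ j ∈ b.2, W i j * x j) ^ 2 :=
        Finset.sum_le_sum (fun i _ => key i)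
    _ = (csp : ℝ) * (L : ℝ) *
          ∑ i, ∑ b ∈ C.P.filter (fun b => i ∈ b.1), (∑ j ∈ b.2, W i j * x j) ^ 2 := by
        rw [Finset.mul_sum]
    _ = (csp : ℝ) * (L : ℝ) * ∑ b ∈ C.P, blockNormSq W b.1 b.2 x := by
        congr 1
        simp_rw [Finset.sum_filter]
        rw [Finset.sum_comm]
        refine Finset.sum_congr rfl (fun b _ => ?_)
        rw [Finset.sum_ite_mem, Finset.univ_inter]
        rfl
end

section
/- Let N be a positive integer, let A, A_k, Â_k ∈ ℝ^{N×N}, b, x_k ∈ ℝ^N, and set W_k := A_k − Â_k. Assume the saturation condition ‖Â_k x_k − A x_k‖₂ ≤ c_sat ‖A_k x_k − A x_k‖₂ with 0 < c_sat < 1, and assume ‖b − A_k x_k‖₂ ≤ α ‖W_k x_k‖₂ for some constant α with 0 ≤ α ≤ 1/2. Then ‖b − A x_k‖₂ ≥ (1 − α(1 + c_sat))/(1 + c_sat) · ‖W_k x_k‖₂. -/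
/-- The Euclidean norm on `ℝ^N`. -/
noncomputable def euclidNormFin {N : ℕ} (v : Fin N → ℝ) : ℝ :=
  Real.sqrt (∑ i, v i ^ 2)

lemma euclidNormFin_eq {N : ℕ} (v : Fin N → ℝ) :
    euclidNormFin v = ‖(WithLp.equiv 2 (Fin N → ℝ)).symm v‖ := by
  rw [EuclideanSpace.norm_eq, euclidNormFin]
  congr 1
  refine Finset.sum_congr rfl fun i _ => ?_
  rw [Real.norm_eq_abs, sq_abs]
  rfl

lemma euclidNormFin_nonneg {N : ℕ} (v : Fin N → ℝ) : 0 ≤ euclidNormFin v := by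
  rw [euclidNormFin_eq]; exact norm_nonneg _

lemma euclidNormFin_sub_le {N : ℕ} (u v w : Fin N → ℝ) :
    euclidNormFin (u - w) ≤ euclidNormFin (u - v) + euclidNormFin (v - w) := by
  simp only [euclidNormFin_eq]
  have : (WithLp.equiv 2 (Fin N → ℝ)).symm (u - w) =
      (WithLp.equiv 2 (Fin N → ℝ)).symm (u - v) + (WithLp.equiv 2 (Fin N → ℝ)).symm (v - w) := by
    simp [← map_add]
  rw [this]
  exact norm_add_le _ _

lemma euclidNormFin_sub_comm {N : ℕ} (u v : Fin N → ℝ) : euclidNormFin (u - v) = euclidNormFin (v - u) := by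
  simp only [euclidNormFin_eq]
  rw [← norm_neg]
  congr 1
  simp [← map_neg]

/-- Lemma 2 (efficiency-type estimate): under the saturation condition and the assumption
`‖b − A_k x_k‖₂ ≤ α ‖W_k x_k‖₂` with `0 ≤ α ≤ 1/2`, the computable quantity `‖W_k x_k‖₂`
is, up to constants, a lower bound for the residual `‖b − A x_k‖₂`. -/
theorem efficiency_lower_bound
    (N : ℕ) (hN : 0 < N)
    (A Ak Ahk : Matrix (Fin N) (Fin N) ℝ) (b xk : Fin N → ℝ)
    (Wk : Matrix (Fin N) (Fin N) ℝ) (hW : Wk = Ak - Ahk)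
    (csat α : ℝ) (hc0 : 0 < csat) (hc1 : csat < 1)
    (hα0 : 0 ≤ α) (hα1 : α ≤ 1 / 2)
    (hsat : euclidNormFin (Ahk.mulVec xk - A.mulVec xk) ≤ csat * euclidNormFin (Ak.mulVec xk - A.mulVec xk))
    (hres : euclidNormFin (b - Ak.mulVec xk) ≤ α * euclidNormFin (Wk.mulVec xk)) :
    (1 - α * (1 + csat)) / (1 + csat) * euclidNormFin (Wk.mulVec xk) ≤
      euclidNormFin (b - A.mulVec xk) := by
  have hWk : Wk.mulVec xk = Ak.mulVec xk - Ahk.mulVec xk := by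
    rw [hW, Matrix.sub_mulVec]
  -- ‖W x‖ ≤ (1+c) ‖A_k x - A x‖
  have h1 : euclidNormFin (Wk.mulVec xk) ≤ (1 + csat) * euclidNormFin (Ak.mulVec xk - A.mulVec xk) := by
    have := euclidNormFin_sub_le (Ak.mulVec xk) (A.mulVec xk) (Ahk.mulVec xk)
    rw [← hWk] at this
    calc euclidNormFin (Wk.mulVec xk)
        ≤ euclidNormFin (Ak.mulVec xk - A.mulVec xk) + euclidNormFin (A.mulVec xk - Ahk.mulVec xk) := this
      _ = euclidNormFin (Ak.mulVec xk - A.mulVec xk) + euclidNormFin (Ahk.mulVec xk - A.mulVec xk) := by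
          rw [euclidNormFin_sub_comm (A.mulVec xk)]
      _ ≤ euclidNormFin (Ak.mulVec xk - A.mulVec xk) + csat * euclidNormFin (Ak.mulVec xk - A.mulVec xk) := by
          linarith
      _ = (1 + csat) * euclidNormFin (Ak.mulVec xk - A.mulVec xk) := by ring
  -- ‖A_k x - A x‖ ≤ ‖b - A x‖ + α ‖W x‖
  have h2 : euclidNormFin (Ak.mulVec xk - A.mulVec xk) ≤
      euclidNormFin (b - A.mulVec xk) + α * euclidNormFin (Wk.mulVec xk) := by
    have := euclidNormFin_sub_le (Ak.mulVec xk) b (A.mulVec xk)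
    have hcomm := euclidNormFin_sub_comm (Ak.mulVec xk) b
    linarith
  have hc : 0 < 1 + csat := by linarith
  rw [div_mul_eq_mul_div, div_le_iff₀ hc]
  nlinarith [euclidNormFin_nonneg (Wk.mulVec xk), euclidNormFin_nonneg (b - A.mulVec xk)]
end

section
/- Let N be a positive integer, let P be a finite set of blocks (t,s) with t, s ⊆ {1,…,N}, let M ⊆ P, and let A_k, Â_k, Â_{k+1} ∈ ℝ^{N×N} with W_k := A_k − Â_k. Let x_k, x_{k+1} ∈ ℝ^N, let 0 < θ < 1, set ε := θ²/(2(1−θ²)), and define η_k² := Σ_{(t,s)∈P} ‖(W_k)_{ts} (x_k)_s‖₂², η_{k+1}² := Σ_{(t,s)∈M} ‖(Â_k − Â_{k+1})_{ts} (x_{k+1})_s‖₂² + Σ_{(t,s)∈P∖M} ‖(W_k)_{ts} (x_{k+1})_s‖₂², and z_k := Σ_{(t,s)∈M} ‖(Â_k − Â_{k+1})_{ts} (x_{k+1})_s‖₂² + (1 + 1/ε)·Σ_{(t,s)∈P∖M} ‖(W_k)_{ts} (x_{k+1} − x_k)_s‖₂². Assume the Dörfler marking condition Σ_{(t,s)∈M}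 ‖(W_k)_{ts} (x_k)_s‖₂² ≥ θ²·η_k². Then η_{k+1}² ≤ (1 − θ²/2)·η_k² + z_k. -/
open Finset

lemma young_sq {ε a b : ℝ} (hε : 0 < ε) :
    (a + b) ^ 2 ≤ (1 + ε) * a ^ 2 + (1 + 1 / ε) * b ^ 2 := by
  have h : 2 * a * b ≤ ε * a ^ 2 + (1 / ε) * b ^ 2 := by
    have h2 : (ε * a - b) ^ 2 / ε ≥ 0 := div_nonneg (sq_nonneg _) hε.le
    have h3 : (ε * a - b) ^ 2 / ε = ε * a ^ 2 + (1 / ε) * b ^ 2 - 2 * a * b := by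
      field_simp; ring
    linarith [h3 ▸ h2]
  nlinarith

lemma blockNormSq_nonneg {N : ℕ} (M : Matrix (Fin N) (Fin N) ℝ)
    (t s : Finset (Fin N)) (x : Fin N → ℝ) : 0 ≤ blockNormSq M t s x :=
  Finset.sum_nonneg fun _ _ => sq_nonneg _

lemma blockNormSq_young {N : ℕ} (M : Matrix (Fin N) (Fin N) ℝ)
    (t s : Finset (Fin N)) (x y : Fin N → ℝ) {ε : ℝ} (hε : 0 < ε) :
    blockNormSq M t s y ≤
      (1 + ε) * blockNormSq M t s x + (1 + 1 / ε) * blockNormSq M t s (y - x) := by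
  unfold blockNormSq
  rw [Finset.mul_sum, Finset.mul_sum, ← Finset.sum_add_distrib]
  refine Finset.sum_le_sum fun i _ => ?_
  have key : (∑ j ∈ s, M i j * y j)
      = (∑ j ∈ s, M i j * x j) + (∑ j ∈ s, M i j * (y - x) j) := by
    rw [← Finset.sum_add_distrib]
    refine Finset.sum_congr rfl fun j _ => ?_
    simp [Pi.sub_apply]; ring
  rw [key]
  exact young_sq hε

/-- Estimator reduction step via Young's inequality with `ε = θ²/(2(1−θ²))`: under the
Dörfler marking condition `Σ_{(t,s)∈M} ‖(W_k)_{ts}(x_k)_s‖₂² ≥ θ²·η_k²` one has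
`η_{k+1}² ≤ (1 − θ²/2)·η_k² + z_k`. -/
theorem estimator_reduction_step
    (N : ℕ) (hN : 0 < N)
    (P M : Finset (Finset (Fin N) × Finset (Fin N))) (hMP : M ⊆ P)
    (Ak Ahk Ahk1 : Matrix (Fin N) (Fin N) ℝ)
    (Wk : Matrix (Fin N) (Fin N) ℝ) (hW : Wk = Ak - Ahk)
    (xk xk1 : Fin N → ℝ)
    (θ : ℝ) (hθ0 : 0 < θ) (hθ1 : θ < 1)
    (ε : ℝ) (hε : ε = θ ^ 2 / (2 * (1 - θ ^ 2)))
    (ηkSq ηk1Sq zk : ℝ)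
    (hηk : ηkSq = ∑ b ∈ P, blockNormSq Wk b.1 b.2 xk)
    (hηk1 : ηk1Sq = ∑ b ∈ M, blockNormSq (Ahk - Ahk1) b.1 b.2 xk1
        + ∑ b ∈ P \ M, blockNormSq Wk b.1 b.2 xk1)
    (hzk : zk = ∑ b ∈ M, blockNormSq (Ahk - Ahk1) b.1 b.2 xk1
        + (1 + 1 / ε) * ∑ b ∈ P \ M, blockNormSq Wk b.1 b.2 (xk1 - xk))
    (hmark : θ ^ 2 * ηkSq ≤ ∑ b ∈ M, blockNormSq Wk b.1 b.2 xk) :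
    ηk1Sq ≤ (1 - θ ^ 2 / 2) * ηkSq + zk := by
  have hθ2 : 0 < 1 - θ ^ 2 := by nlinarith
  have hεpos : 0 < ε := by
    rw [hε]; positivity
  -- split ηkSq over M and P \ M
  have hsplit : ηkSq = (∑ b ∈ M, blockNormSq Wk b.1 b.2 xk)
      + ∑ b ∈ P \ M, blockNormSq Wk b.1 b.2 xk := by
    rw [hηk, ← Finset.sum_sdiff hMP]; ring
  have hcomp : (∑ b ∈ P \ M, blockNormSq Wk b.1 b.2 xk) ≤ (1 - θ ^ 2) * ηkSq := by
    nlinarith [hmark]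
  -- blockwise Young on P \ M
  have hYoung : (∑ b ∈ P \ M, blockNormSq Wk b.1 b.2 xk1)
      ≤ (1 + ε) * (∑ b ∈ P \ M, blockNormSq Wk b.1 b.2 xk)
        + (1 + 1 / ε) * (∑ b ∈ P \ M, blockNormSq Wk b.1 b.2 (xk1 - xk)) := by
    rw [Finset.mul_sum, Finset.mul_sum, ← Finset.sum_add_distrib]
    exact Finset.sum_le_sum fun b _ => blockNormSq_young Wk b.1 b.2 xk xk1 hεpos
  have hcoef : (1 + ε) * (1 - θ ^ 2) = 1 - θ ^ 2 / 2 := by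
    rw [hε]; field_simp; ring
  have h1 : (1 + ε) * (∑ b ∈ P \ M, blockNormSq Wk b.1 b.2 xk)
      ≤ (1 - θ ^ 2 / 2) * ηkSq := by
    rw [← hcoef, mul_assoc]
    exact mul_le_mul_of_nonneg_left hcomp (by linarith)
  rw [hηk1, hzk]
  linarith
end

section
/- Let N, L, c_sp be positive integers and let P be an L-level sparse block collection with sparsity constant c_sp. Then for every x ∈ ℝ^N it holds that Σ_{(t,s)∈P} ‖x_s‖₂² ≤ c_sp · L · ‖x‖₂², where ‖x_s‖₂² = Σ_{j∈s} x_j². -/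
open Finset

/-- The Euclidean norm on `ℝ^N`. -/
noncomputable def enormEuclid {N : ℕ} (v : Fin N → ℝ) : ℝ :=
  Real.sqrt (∑ i, v i ^ 2)

/-- Counting bound underlying the estimate `z_k ≤ c_sp·L·[…]`: for an `L`-level sparse
block collection `P` with sparsity constant `c_sp`,
`Σ_{(t,s)∈P} ‖x_s‖₂² ≤ c_sp · L · ‖x‖₂²` for every `x ∈ ℝ^N`. -/
theorem column_counting_bound
    (N L csp : ℕ) (hN : 0 < N) (hL : 0 < L) (hcsp : 0 < csp)
    (C : SparseBlockCollection N L csp) :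
    ∀ x : Fin N → ℝ,
      ∑ b ∈ C.P, ∑ j ∈ b.2, x j ^ 2 ≤ (csp : ℝ) * (L : ℝ) * enormEuclid x ^ 2 := by
  intro x
  have hx2 : enormEuclid x ^ 2 = ∑ i, x i ^ 2 := by
    rw [enormEuclid, Real.sq_sqrt]; positivity
  have hfib : ∑ b ∈ C.P, ∑ j ∈ b.2, x j ^ 2
      = ∑ ℓ ∈ Finset.Icc 1 L, ∑ b ∈ C.P.filter (fun b => C.lvl b = ℓ), ∑ j ∈ b.2, x j ^ 2 := by
    rw [Finset.sum_fiberwise_of_maps_to]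
    intro b hb
    exact Finset.mem_Icc.mpr ⟨(C.lvl_range b hb).1, (C.lvl_range b hb).2⟩
  have hlev : ∀ ℓ ∈ Finset.Icc 1 L,
      ∑ b ∈ C.P.filter (fun b => C.lvl b = ℓ), ∑ j ∈ b.2, x j ^ 2
        ≤ (csp : ℝ) * ∑ i, x i ^ 2 := by
    intro ℓ _
    set Pℓ := C.P.filter (fun b => C.lvl b = ℓ) with hPℓ
    have hmemℓ : ∀ b ∈ Pℓ, b ∈ C.P ∧ C.lvl b = ℓ := fun b hb => Finset.mem_filter.mp hb
    have hgroup : ∑ b ∈ Pℓ, ∑ j ∈ b.2, x j ^ 2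
        = ∑ s ∈ Pℓ.image Prod.snd, ∑ b ∈ Pℓ.filter (fun b => b.2 = s), ∑ j ∈ b.2, x j ^ 2 := by
      rw [Finset.sum_fiberwise_of_maps_to]
      intro b hb; exact Finset.mem_image_of_mem _ hb
    have hinner : ∀ s ∈ Pℓ.image Prod.snd,
        ∑ b ∈ Pℓ.filter (fun b => b.2 = s), ∑ j ∈ b.2, x j ^ 2
          ≤ (csp : ℝ) * ∑ j ∈ s, x j ^ 2 := by
      intro s hs
      have hconst : ∑ b ∈ Pℓ.filter (fun b => b.2 = s), ∑ j ∈ b.2, x j ^ 2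
          = ((Pℓ.filter (fun b => b.2 = s)).card : ℝ) * ∑ j ∈ s, x j ^ 2 := by
        rw [Finset.sum_congr rfl (fun b hb => by
          rw [(Finset.mem_filter.mp hb).2]), Finset.sum_const, nsmul_eq_mul]
      have hcard : (Pℓ.filter (fun b => b.2 = s)).card ≤ csp := by
        have : Pℓ.filter (fun b => b.2 = s)
            = C.P.filter (fun b => C.lvl b = ℓ ∧ b.2 = s) := by
          rw [hPℓ, Finset.filter_filter]
        rw [this]; exact C.col_sparsity ℓ s
      rw [hconst]
      apply mul_le_mul_of_nonneg_right _ (by positivity)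
      exact_mod_cast hcard
    have hdisj : ∀ s ∈ Pℓ.image Prod.snd, ∀ s' ∈ Pℓ.image Prod.snd, s ≠ s' →
        Disjoint s s' := by
      intro s hs s' hs' hne
      obtain ⟨b, hb, rfl⟩ := Finset.mem_image.mp hs
      obtain ⟨b', hb', rfl⟩ := Finset.mem_image.mp hs'
      rcases C.cols_eq_or_disjoint b (hmemℓ b hb).1 b' (hmemℓ b' hb').1
        (by rw [(hmemℓ b hb).2, (hmemℓ b' hb').2]) with h | h
      · exact absurd h hne
      · exact h
    have hcover : ∑ s ∈ Pℓ.image Prod.snd, ∑ j ∈ s, x j ^ 2 ≤ ∑ i, x i ^ 2 := by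
      rw [← Finset.sum_biUnion (fun s hs s' hs' hne => hdisj s hs s' hs' hne)]
      exact Finset.sum_le_sum_of_subset_of_nonneg (Finset.subset_univ _)
        (fun i _ _ => by positivity)
    calc ∑ b ∈ Pℓ, ∑ j ∈ b.2, x j ^ 2
        = ∑ s ∈ Pℓ.image Prod.snd, ∑ b ∈ Pℓ.filter (fun b => b.2 = s), ∑ j ∈ b.2, x j ^ 2 :=
          hgroup
      _ ≤ ∑ s ∈ Pℓ.image Prod.snd, (csp : ℝ) * ∑ j ∈ s, x j ^ 2 :=
          Finset.sum_le_sum hinner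
      _ = (csp : ℝ) * ∑ s ∈ Pℓ.image Prod.snd, ∑ j ∈ s, x j ^ 2 := by
          rw [Finset.mul_sum]
      _ ≤ (csp : ℝ) * ∑ i, x i ^ 2 :=
          mul_le_mul_of_nonneg_left hcover (by positivity)
  calc ∑ b ∈ C.P, ∑ j ∈ b.2, x j ^ 2
      = ∑ ℓ ∈ Finset.Icc 1 L, ∑ b ∈ C.P.filter (fun b => C.lvl b = ℓ), ∑ j ∈ b.2, x j ^ 2 :=
        hfib
    _ ≤ ∑ ℓ ∈ Finset.Icc 1 L, (csp : ℝ) * ∑ i, x i ^ 2 := Finset.sum_le_sum hlev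
    _ = (csp : ℝ) * (L : ℝ) * enormEuclid x ^ 2 := by
        rw [Finset.sum_const, Nat.card_Icc, hx2, nsmul_eq_mul]
        push_cast
        ring
end
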